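/- Let T be an expandable partial reachability tree of a one-dimensional BVASS. Then for every node u of T, either T(u) is reachable, or the subtree of T rooted at u is not expandable. In particular, the root label T(ε) is reachable. -/

import Mathlib

/-- A one-dimensional branching vector addition system with states:
branching transitions `br`, unary transitions `un` with update in `{-1,0,1}`,
and final states `final`. -/
structure BVASS1 (Q : Type) where
  br : Q → Q → Q → Prop
  un : Q → ℤ → Q → Prop
  un_small : ∀ q z p, un q z p → z = -1 ∨ z = 0 ∨ z = 1
  final : Q → Prop

/-- A finite binary tree with nodes given by a prefix-closed set of words over
`Bool` and labels in `Q × ℕ`. -/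
structure BTree (Q : Type) where
  dom : Set (List Bool)
  label : List Bool → Q × ℕ
  finite : dom.Finite
  root_mem : ([] : List Bool) ∈ dom
  prefixClosed : ∀ ⦃u v : List Bool⦄, v ∈ dom → u <+: v → u ∈ dom

/-- `u` is a strict ancestor of `v`. -/
def StrictPrefix (u v : List Bool) : Prop := u <+: v ∧ u ≠ v

/-- `u` is the lowest common ancestor of `v` and `w`. -/
def IsLCA (u v w : List Bool) : Prop :=
  u <+: v ∧ u <+: w ∧ ∀ u', u' <+: v → u' <+: w → u' <+: u

namespace BTree

variable {Q : Type}

def state (T : BTree Q) (u : List Bool) : Q := (T.label u).1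

def counter (T : BTree Q) (u : List Bool) : ℕ := (T.label u).2

def IsLeaf (T : BTree Q) (u : List Bool) : Prop :=
  u ∈ T.dom ∧ ∀ b : Bool, u ++ [b] ∉ T.dom

/-- The subtree of `T` rooted at node `u`. -/
def subtree (T : BTree Q) (u : List Bool) (hu : u ∈ T.dom) : BTree Q where
  dom := {x | u ++ x ∈ T.dom}
  label := fun x => T.label (u ++ x)
  finite := Set.Finite.preimage
    (Function.Injective.injOn fun a b h => by simpa using h) T.finite
  root_mem := by simpa using hu
  prefixClosed := by
    rintro a c hc ⟨t, rfl⟩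
    exact T.prefixClosed hc ⟨t, by simp⟩

/-- All counter values in the tree are at most `j`. -/
def Bounded (T : BTree Q) (j : ℕ) : Prop := ∀ u ∈ T.dom, T.counter u ≤ j

/-- All counter values, except possibly the root's, are at most `j`. -/
def AlmostBounded (T : BTree Q) (j : ℕ) : Prop :=
  ∀ u ∈ T.dom, u ≠ [] → T.counter u ≤ j

/-- A node is increasing if it has a strict ancestor with the same state
and a strictly smaller counter value. -/
def Increasing (T : BTree Q) (v : List Bool) : Prop :=
  ∃ u ∈ T.dom, StrictPrefix u v ∧ T.state u = T.state v ∧ T.counter u < T.counter v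

/-- `u` is the anchor of the increasing node `v`: the maximal strict ancestor of `v`
with the same state and strictly smaller counter value. -/
def IsAnchorOf (T : BTree Q) (u v : List Bool) : Prop :=
  u ∈ T.dom ∧ StrictPrefix u v ∧ T.state u = T.state v ∧ T.counter u < T.counter v ∧
    ∀ u' ∈ T.dom, StrictPrefix u' v → T.state u' = T.state v →
      T.counter u' < T.counter v → u' <+: u

/-- The tree is exclusive: the least common ancestor of any two distinct increasing
leaves is a strict ancestor of at least one of their anchors. -/
def Exclusive (T : BTree Q) : Prop :=
  ∀ v w, T.IsLeaf v → T.IsLeaf w → T.Increasing v → T.Increasing w → v ≠ w →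
    ∀ a b l, T.IsAnchorOf a v → T.IsAnchorOf b w → IsLCA l v w →
      StrictPrefix l a ∨ StrictPrefix l b

end BTree

namespace BVASS1

variable {Q : Type}

/-- `T` is a partial reachability tree of `B`: at every inner node either a
branching transition splits the counter over two children, or a unary transition
changes the counter by `z` along a single-child edge. -/
def IsPRT (B : BVASS1 Q) (T : BTree Q) : Prop :=
  ∀ u ∈ T.dom, ¬ T.IsLeaf u →
    ((u ++ [false] ∈ T.dom ∧ u ++ [true] ∈ T.dom ∧
        B.br (T.state u) (T.state (u ++ [false])) (T.state (u ++ [true])) ∧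
        T.counter u = T.counter (u ++ [false]) + T.counter (u ++ [true])) ∨
     (u ++ [false] ∈ T.dom ∧ u ++ [true] ∉ T.dom ∧
        ∃ z : ℤ, B.un (T.state u) z (T.state (u ++ [false])) ∧
          (T.counter (u ++ [false]) : ℤ) = (T.counter u : ℤ) + z))

/-- `T` is a (full) reachability tree of `B`: a partial reachability tree all of
whose leaves are accepting (final state, counter zero). -/
def IsRT (B : BVASS1 Q) (T : BTree Q) : Prop :=
  B.IsPRT T ∧ ∀ u, T.IsLeaf u → B.final (T.state u) ∧ T.counter u = 0

/-- The configuration `q(n)` is reachable. -/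
def Reachable (B : BVASS1 Q) (q : Q) (n : ℕ) : Prop :=
  ∃ T : BTree Q, B.IsRT T ∧ T.label [] = (q, n)

/-- The reachability set of a control state. -/
def reachSet (B : BVASS1 Q) (q : Q) : Set ℕ := {n | B.Reachable q n}

/-- The configuration `q(n)` is coverable. -/
def Coverable (B : BVASS1 Q) (q : Q) (n : ℕ) : Prop :=
  ∃ m, n ≤ m ∧ B.Reachable q m

/-- `T` is expandable: exclusive, every leaf is accepting or increasing, and every
increasing leaf with its anchor induces a positive residue-reachability instance. -/
def Expandable (B : BVASS1 Q) (T : BTree Q) : Prop :=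
  T.Exclusive ∧
  (∀ v, T.IsLeaf v → (B.final (T.state v) ∧ T.counter v = 0) ∨ T.Increasing v) ∧
  (∀ v u, T.IsLeaf v → T.IsAnchorOf u v →
    ∃ l, B.Reachable (T.state v) l ∧ T.counter v ≤ l ∧
      l ≡ T.counter v [MOD T.counter v - T.counter u])

end BVASS1


section Aux

theorem prefix_antisymm' {a b : List Bool} (h1 : a <+: b) (h2 : b <+: a) : a = b :=
  h1.eq_of_length (le_antisymm h1.length_le h2.length_le)

/-- Existence of LCA. -/
theorem exists_isLCA (v w : List Bool) : ∃ l, IsLCA l v w := by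
  classical
  obtain ⟨l, hl, hmax⟩ := Finset.exists_max_image
    (v.inits.toFinset.filter (fun l => l <+: w)) List.length
    ⟨[], by simp [List.mem_inits]⟩
  simp only [Finset.mem_filter, List.mem_toFinset, List.mem_inits] at hl
  refine ⟨l, hl.1, hl.2, fun u' h1 h2 => ?_⟩
  have hu' : u' ∈ v.inits.toFinset.filter (fun l => l <+: w) := Finset.mem_filter.mpr
    ⟨by simpa [List.mem_inits] using h1, h2⟩
  exact List.prefix_of_prefix_length_le h1 hl.1 (hmax u' hu')

namespace BTree

variable {Q : Type}

/-- Every increasing node has an anchor. -/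
theorem Increasing.exists_anchor {T : BTree Q} {v : List Bool}
    (h : T.Increasing v) : ∃ u, T.IsAnchorOf u v := by
  classical
  obtain ⟨u0, hu0, hsp0, hst0, hc0⟩ := h
  obtain ⟨u, hu, hmax⟩ := Finset.exists_max_image
    (T.finite.toFinset.filter (fun u => StrictPrefix u v ∧ T.state u = T.state v ∧
      T.counter u < T.counter v)) List.length
    ⟨u0, by simp only [Finset.mem_filter, Set.Finite.mem_toFinset]; exact ⟨hu0, hsp0, hst0, hc0⟩⟩
  simp only [Finset.mem_filter, Set.Finite.mem_toFinset] at hu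
  refine ⟨u, hu.1, hu.2.1, hu.2.2.1, hu.2.2.2, fun u' hu' hsp' hst' hc' => ?_⟩
  have : u' ∈ T.finite.toFinset.filter (fun u => StrictPrefix u v ∧ T.state u = T.state v ∧
      T.counter u < T.counter v) := Finset.mem_filter.mpr
    ⟨Set.Finite.mem_toFinset _ |>.mpr hu', hsp', hst', hc'⟩
  exact List.prefix_of_prefix_length_le hsp'.1 hu.2.1.1 (hmax u' this)

/-- Weight of a node: number of descendants (including itself) in the tree. -/
noncomputable def wt (T : BTree Q) (p : List Bool) : ℕ :=
  (T.finite.toFinset.filter (fun x => p <+: x)).card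

theorem wt_lt {T : BTree Q} {p w : List Bool} (hp : p ∈ T.dom)
    (hpw : p <+: w) (hne : p ≠ w) : T.wt w < T.wt p := by
  classical
  have hsub : T.finite.toFinset.filter (fun x => w <+: x) ⊆
      (T.finite.toFinset.filter (fun x => p <+: x)).erase p := by
    intro x hx
    simp only [Finset.mem_filter, Finset.mem_erase] at hx ⊢
    refine ⟨fun hxp => ?_, hx.1, hpw.trans hx.2⟩
    subst hxp
    exact hne (prefix_antisymm' hpw hx.2)
  calc T.wt w ≤ _ := Finset.card_le_card hsub
    _ < T.wt p := Finset.card_erase_lt_of_mem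
        (by simp only [Finset.mem_filter, Set.Finite.mem_toFinset]; exact ⟨hp, List.prefix_refl p⟩)

end BTree

namespace BVASS1

variable {Q : Type}

/-- Inductive characterization of reachability. -/
inductive Reach (B : BVASS1 Q) : Q → ℕ → Prop
  | final {q} : B.final q → Reach B q 0
  | brs {q q1 q2 n1 n2} : B.br q q1 q2 → Reach B q1 n1 → Reach B q2 n2 → Reach B q (n1 + n2)
  | uns {q : Q} {z : ℤ} {p : Q} {n m : ℕ} :
      B.un q z p → (m : ℤ) = (n : ℤ) + z → Reach B p m → Reach B q n

/-- Single node tree. -/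
def leafTree (q : Q) (n : ℕ) : BTree Q where
  dom := {[]}
  label := fun _ => (q, n)
  finite := Set.finite_singleton _
  root_mem := rfl
  prefixClosed := by
    rintro u v rfl hu
    exact List.prefix_nil.mp hu

/-- Tree with a unary root edge to a subtree. -/
def consTree (q : Q) (n : ℕ) (T' : BTree Q) : BTree Q where
  dom := {[]} ∪ (List.cons false) '' T'.dom
  label := fun x => match x with
    | [] => (q, n)
    | _ :: x => T'.label x
  finite := (Set.finite_singleton _).union (T'.finite.image _)
  root_mem := Or.inl rfl
  prefixClosed := by
    rintro u v hv huv
    rcases hv with rfl | ⟨y, hy, rfl⟩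
    · exact Or.inl (List.prefix_nil.mp huv)
    · match u, huv with
      | [], _ => exact Or.inl rfl
      | c :: u, huv =>
        obtain ⟨rfl, h2⟩ := List.cons_prefix_cons.mp huv
        exact Or.inr ⟨u, T'.prefixClosed hy h2, rfl⟩

/-- Tree with a branching root to two subtrees. -/
def brTree (q : Q) (n : ℕ) (T1 T2 : BTree Q) : BTree Q where
  dom := {[]} ∪ (List.cons false) '' T1.dom ∪ (List.cons true) '' T2.dom
  label := fun x => match x with
    | [] => (q, n)
    | false :: x => T1.label x
    | true :: x => T2.label x
  finite := ((Set.finite_singleton _).union (T1.finite.image _)).union (T2.finite.image _)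
  root_mem := Or.inl (Or.inl rfl)
  prefixClosed := by
    rintro u v hv huv
    rcases hv with (rfl | ⟨y, hy, rfl⟩) | ⟨y, hy, rfl⟩
    · exact Or.inl (Or.inl (List.prefix_nil.mp huv))
    · match u, huv with
      | [], _ => exact Or.inl (Or.inl rfl)
      | c :: u, huv =>
        obtain ⟨rfl, h2⟩ := List.cons_prefix_cons.mp huv
        exact Or.inl (Or.inr ⟨u, T1.prefixClosed hy h2, rfl⟩)
    · match u, huv with
      | [], _ => exact Or.inl (Or.inl rfl)
      | c :: u, huv =>
        obtain ⟨rfl, h2⟩ := List.cons_prefix_cons.mp huv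
        exact Or.inr ⟨u, T2.prefixClosed hy h2, rfl⟩

theorem isRT_leafTree {B : BVASS1 Q} {q : Q} (hq : B.final q) :
    B.IsRT (leafTree q 0) := by
  constructor
  · intro u hu hnl
    exact absurd ⟨hu, fun b hb => by
      rcases hu with rfl
      simp only [leafTree, Set.mem_singleton_iff] at hb
      exact absurd hb (by simp)⟩ hnl
  · rintro u ⟨rfl, -⟩
    exact ⟨hq, rfl⟩

@[simp] theorem consTree_mem_cons {q : Q} {n : ℕ} {T' : BTree Q} {b : Bool} {x : List Bool} :
    (b :: x) ∈ (consTree q n T').dom ↔ b = false ∧ x ∈ T'.dom := by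
  constructor
  · rintro (h | ⟨y, hy, hyy⟩)
    · simp at h
    · obtain ⟨h1, h2⟩ := (List.cons.injEq false y b x).mp hyy
      exact ⟨h1.symm, h2 ▸ hy⟩
  · rintro ⟨rfl, hx⟩
    exact Or.inr ⟨x, hx, rfl⟩

@[simp] theorem consTree_state_cons {q : Q} {n : ℕ} {T' : BTree Q} {b : Bool} {x : List Bool} :
    (consTree q n T').state (b :: x) = T'.state x := rfl

@[simp] theorem consTree_counter_cons {q : Q} {n : ℕ} {T' : BTree Q} {b : Bool} {x : List Bool} :
    (consTree q n T').counter (b :: x) = T'.counter x := rfl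

theorem consTree_leaf {q : Q} {n : ℕ} {T' : BTree Q} {u : List Bool} :
    (consTree q n T').IsLeaf u ↔ ∃ y, u = false :: y ∧ T'.IsLeaf y := by
  constructor
  · rintro ⟨hu, hl⟩
    rcases hu with rfl | ⟨y, hy, rfl⟩
    · exact absurd (hl false) (by
        intro hc
        exact hc (Or.inr ⟨[], T'.root_mem, rfl⟩))
    · refine ⟨y, rfl, hy, fun b hb => hl b ?_⟩
      exact Or.inr ⟨y ++ [b], hb, rfl⟩
  · rintro ⟨y, rfl, hy, hl⟩
    refine ⟨Or.inr ⟨y, hy, rfl⟩, fun b hb => ?_⟩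
    rcases hb with h | ⟨z, hz, hzz⟩
    · simp at h
    · obtain ⟨rfl⟩ : y ++ [b] = z := by
        simpa using hzz.symm
      exact hl b hz

theorem isRT_consTree {B : BVASS1 Q} {q p : Q} {n m : ℕ} {z : ℤ} {T' : BTree Q}
    (htr : B.un q z p) (hz : (m : ℤ) = (n : ℤ) + z)
    (hT' : B.IsRT T') (hroot : T'.label [] = (p, m)) :
    B.IsRT (consTree q n T') := by
  have hsr : (consTree q n T').state [] = q := rfl
  have hcr : (consTree q n T').counter [] = n := rfl
  have hs0 : T'.state [] = p := by simp [BTree.state, hroot]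
  have hc0 : T'.counter [] = m := by simp [BTree.counter, hroot]
  constructor
  · rintro u hu hnl
    rcases hu with rfl | ⟨y, hy, rfl⟩
    · right
      refine ⟨Or.inr ⟨[], T'.root_mem, rfl⟩, by simp, z, ?_, ?_⟩
      · show B.un ((consTree q n T').state []) z ((consTree q n T').state [false])
        rw [hsr]
        show B.un q z (T'.state [])
        rw [hs0]; exact htr
      · show ((consTree q n T').counter [false] : ℤ) = ((consTree q n T').counter [] : ℤ) + z
        rw [hcr]
        show ((T'.counter [] : ℕ) : ℤ) = (n : ℤ) + z
        rw [hc0]; exact hz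
    · have hyl : ¬ T'.IsLeaf y := by
        intro hyl
        exact hnl (consTree_leaf.mpr ⟨y, rfl, hyl⟩)
      have := hT'.1 y hy hyl
      simpa [List.cons_append, BTree.state, BTree.counter, consTree] using this
  · intro u hu
    obtain ⟨y, rfl, hyl⟩ := consTree_leaf.mp hu
    exact hT'.2 y hyl

@[simp] theorem brTree_mem_cons {q : Q} {n : ℕ} {T1 T2 : BTree Q} {b : Bool} {x : List Bool} :
    (b :: x) ∈ (brTree q n T1 T2).dom ↔
      (b = false ∧ x ∈ T1.dom) ∨ (b = true ∧ x ∈ T2.dom) := by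
  constructor
  · rintro ((h | ⟨y, hy, hyy⟩) | ⟨y, hy, hyy⟩)
    · simp at h
    · obtain ⟨h1, h2⟩ := (List.cons.injEq false y b x).mp hyy
      exact Or.inl ⟨h1.symm, h2 ▸ hy⟩
    · obtain ⟨h1, h2⟩ := (List.cons.injEq true y b x).mp hyy
      exact Or.inr ⟨h1.symm, h2 ▸ hy⟩
  · rintro (⟨rfl, hx⟩ | ⟨rfl, hx⟩)
    · exact Or.inl (Or.inr ⟨x, hx, rfl⟩)
    · exact Or.inr ⟨x, hx, rfl⟩

@[simp] theorem brTree_state_false {q : Q} {n : ℕ} {T1 T2 : BTree Q} {x : List Bool} :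
    (brTree q n T1 T2).state (false :: x) = T1.state x := rfl

@[simp] theorem brTree_state_true {q : Q} {n : ℕ} {T1 T2 : BTree Q} {x : List Bool} :
    (brTree q n T1 T2).state (true :: x) = T2.state x := rfl

@[simp] theorem brTree_counter_false {q : Q} {n : ℕ} {T1 T2 : BTree Q} {x : List Bool} :
    (brTree q n T1 T2).counter (false :: x) = T1.counter x := rfl

@[simp] theorem brTree_counter_true {q : Q} {n : ℕ} {T1 T2 : BTree Q} {x : List Bool} :
    (brTree q n T1 T2).counter (true :: x) = T2.counter x := rfl

theorem brTree_leaf {q : Q} {n : ℕ} {T1 T2 : BTree Q} {u : List Bool} :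
    (brTree q n T1 T2).IsLeaf u ↔
      (∃ y, u = false :: y ∧ T1.IsLeaf y) ∨ (∃ y, u = true :: y ∧ T2.IsLeaf y) := by
  constructor
  · rintro ⟨hu, hl⟩
    rcases hu with (rfl | ⟨y, hy, rfl⟩) | ⟨y, hy, rfl⟩
    · exact absurd (hl false) (by
        intro hc
        exact hc (Or.inl (Or.inr ⟨[], T1.root_mem, rfl⟩)))
    · refine Or.inl ⟨y, rfl, hy, fun b hb => hl b (Or.inl (Or.inr ⟨y ++ [b], hb, rfl⟩))⟩
    · refine Or.inr ⟨y, rfl, hy, fun b hb => hl b (Or.inr ⟨y ++ [b], hb, rfl⟩)⟩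
  · rintro (⟨y, rfl, hy, hl⟩ | ⟨y, rfl, hy, hl⟩)
    · refine ⟨Or.inl (Or.inr ⟨y, hy, rfl⟩), fun b hb => ?_⟩
      rw [List.cons_append] at hb
      rcases brTree_mem_cons.mp hb with ⟨-, h⟩ | ⟨h, -⟩
      · exact hl b h
      · simp at h
    · refine ⟨Or.inr ⟨y, hy, rfl⟩, fun b hb => ?_⟩
      rw [List.cons_append] at hb
      rcases brTree_mem_cons.mp hb with ⟨h, -⟩ | ⟨-, h⟩
      · simp at h
      · exact hl b h

theorem isRT_brTree {B : BVASS1 Q} {q q1 q2 : Q} {n1 n2 : ℕ} {T1 T2 : BTree Q}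
    (htr : B.br q q1 q2)
    (hT1 : B.IsRT T1) (hroot1 : T1.label [] = (q1, n1))
    (hT2 : B.IsRT T2) (hroot2 : T2.label [] = (q2, n2)) :
    B.IsRT (brTree q (n1 + n2) T1 T2) := by
  have hs1 : T1.state [] = q1 := by simp [BTree.state, hroot1]
  have hc1 : T1.counter [] = n1 := by simp [BTree.counter, hroot1]
  have hs2 : T2.state [] = q2 := by simp [BTree.state, hroot2]
  have hc2 : T2.counter [] = n2 := by simp [BTree.counter, hroot2]
  constructor
  · rintro u hu hnl
    rcases hu with (rfl | ⟨y, hy, rfl⟩) | ⟨y, hy, rfl⟩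
    · left
      refine ⟨Or.inl (Or.inr ⟨[], T1.root_mem, rfl⟩), Or.inr ⟨[], T2.root_mem, rfl⟩, ?_, ?_⟩
      · show B.br q (T1.state []) (T2.state [])
        rw [hs1, hs2]; exact htr
      · show n1 + n2 = T1.counter [] + T2.counter []
        rw [hc1, hc2]
    · have hyl : ¬ T1.IsLeaf y := fun hyl => hnl (brTree_leaf.mpr (Or.inl ⟨y, rfl, hyl⟩))
      have := hT1.1 y hy hyl
      simpa [List.cons_append, BTree.state, BTree.counter, brTree] using this
    · have hyl : ¬ T2.IsLeaf y := fun hyl => hnl (brTree_leaf.mpr (Or.inr ⟨y, rfl, hyl⟩))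
      have := hT2.1 y hy hyl
      simpa [List.cons_append, BTree.state, BTree.counter, brTree] using this
  · intro u hu
    rcases brTree_leaf.mp hu with ⟨y, rfl, hyl⟩ | ⟨y, rfl, hyl⟩
    · exact hT1.2 y hyl
    · exact hT2.2 y hyl

theorem Reach.reachable {B : BVASS1 Q} {q : Q} {n : ℕ} (h : B.Reach q n) :
    B.Reachable q n := by
  induction h with
  | @final q hq => exact ⟨leafTree q 0, isRT_leafTree hq, rfl⟩
  | @brs q q1 q2 n1 n2 htr h1 h2 ih1 ih2 =>
    obtain ⟨T1, hT1, hr1⟩ := ih1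
    obtain ⟨T2, hT2, hr2⟩ := ih2
    exact ⟨brTree q (n1 + n2) T1 T2, isRT_brTree htr hT1 hr1 hT2 hr2, rfl⟩
  | @uns q z p n m htr hz h ih =>
    obtain ⟨T', hT', hr⟩ := ih
    exact ⟨consTree q n T', isRT_consTree htr hz hT' hr, rfl⟩

end BVASS1

end Aux


section Main

theorem length_lt_of_strict {a b : List Bool} (h : a <+: b) (hne : a ≠ b) :
    a.length < b.length :=
  lt_of_le_of_ne h.length_le (fun hl => hne (h.eq_of_length hl))

namespace BVASS1

variable {Q : Type}

theorem wt_pos {T : BTree Q} {p : List Bool} (hp : p ∈ T.dom) : 0 < T.wt p := by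
  classical
  exact Finset.card_pos.mpr ⟨p, Finset.mem_filter.mpr
    ⟨(Set.Finite.mem_toFinset _).mpr hp, List.prefix_refl p⟩⟩

theorem rt_reach {B : BVASS1 Q} {T : BTree Q} (hT : B.IsRT T) :
    ∀ p ∈ T.dom, B.Reach (T.state p) (T.counter p) := by
  classical
  suffices h : ∀ N p, p ∈ T.dom → T.wt p ≤ N → B.Reach (T.state p) (T.counter p) from
    fun p hp => h (T.wt p) p hp le_rfl
  intro N
  induction N with
  | zero =>
    intro p hp hw
    exact absurd hw (by have := wt_pos hp; omega)
  | succ N ih =>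
    intro p hp hw
    by_cases hl : T.IsLeaf p
    · obtain ⟨hf, hc⟩ := hT.2 p hl
      rw [hc]; exact .final hf
    · have hwc : ∀ b : Bool, p ++ [b] ∈ T.dom → T.wt (p ++ [b]) ≤ N := by
        intro b hb
        have := BTree.wt_lt hp (List.prefix_append p [b]) (by simp)
        omega
      rcases hT.1 p hp hl with ⟨h1, h2, h3, h4⟩ | ⟨h1, h2, z, h3, h4⟩
      · rw [h4]
        exact .brs h3 (ih _ h1 (hwc false h1)) (ih _ h2 (hwc true h2))
      · exact .uns h3 h4 (ih _ h1 (hwc false h1))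

theorem Reachable.reach {B : BVASS1 Q} {q : Q} {n : ℕ} (h : B.Reachable q n) :
    B.Reach q n := by
  obtain ⟨T, hT, hlab⟩ := h
  have := rt_reach hT [] T.root_mem
  simpa [BTree.state, BTree.counter, hlab] using this

/-- Pumping along a path: if all off-path side children have reachable labels,
an extra Δ can be carried from the end of the path up to its start. -/
theorem pump {B : BVASS1 Q} {T : BTree Q} (hT : B.IsPRT T) :
    ∀ (s p : List Bool), p ++ s ∈ T.dom →
      (∀ q b, p <+: q → q ++ [b] <+: p ++ s → q ++ [!b] ∈ T.dom →
        B.Reach (T.state (q ++ [!b])) (T.counter (q ++ [!b]))) →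
      ∀ Δ : ℕ, B.Reach (T.state (p ++ s)) (T.counter (p ++ s) + Δ) →
        B.Reach (T.state p) (T.counter p + Δ) := by
  intro s
  induction s with
  | nil =>
    intro p hp _ Δ h
    simpa using h
  | cons b s ih =>
    intro p hp hside Δ h
    have hpb : p ++ [b] ∈ T.dom := T.prefixClosed hp ⟨s, by simp⟩
    have hp' : p ∈ T.dom := T.prefixClosed hp ⟨b :: s, rfl⟩
    have hnl : ¬ T.IsLeaf p := fun hl => hl.2 b hpb
    have hstep : B.Reach (T.state (p ++ [b])) (T.counter (p ++ [b]) + Δ) := by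
      refine ih (p ++ [b]) (by simpa [List.append_assoc] using hp) ?_ Δ
        (by simpa [List.append_assoc] using h)
      intro q c hq hqc hqin
      refine hside q c ((List.prefix_append p [b]).trans hq) ?_ hqin
      simpa [List.append_assoc] using hqc
    rcases hT p hp' hnl with ⟨h1, h2, h3, h4⟩ | ⟨h1, h2, z, h3, h4⟩
    · cases b
      · have hsr : B.Reach (T.state (p ++ [true])) (T.counter (p ++ [true])) := by
          have := hside p false (List.prefix_refl p) ⟨s, by simp⟩ (by simpa using h2)
          simpa using this
        have heq : T.counter p + Δ =
            (T.counter (p ++ [false]) + Δ) + T.counter (p ++ [true]) := by omega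
        rw [heq]
        exact .brs h3 hstep hsr
      · have hsr : B.Reach (T.state (p ++ [false])) (T.counter (p ++ [false])) := by
          have := hside p true (List.prefix_refl p) ⟨s, by simp⟩ (by simpa using h1)
          simpa using this
        have heq : T.counter p + Δ =
            T.counter (p ++ [false]) + (T.counter (p ++ [true]) + Δ) := by omega
        rw [heq]
        exact .brs h3 hsr hstep
    · cases b
      · exact .uns h3 (by push_cast; omega) hstep
      · exact absurd hpb h2

/-- Main lemma: in an expandable PRT, every node all of whose descendant
increasing leaves are anchored at or below it has a reachable label. -/
theorem expandable_reach {B : BVASS1 Q} {T : BTree Q} (hT : B.IsPRT T)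
    (hexp : B.Expandable T) :
    ∀ p ∈ T.dom,
      (∀ x u, T.IsLeaf x → p <+: x → T.Increasing x → T.IsAnchorOf u x → p <+: u) →
      B.Reach (T.state p) (T.counter p) := by
  classical
  suffices h : ∀ N p, p ∈ T.dom → T.wt p ≤ N →
      (∀ x u, T.IsLeaf x → p <+: x → T.Increasing x → T.IsAnchorOf u x → p <+: u) →
      B.Reach (T.state p) (T.counter p) from
    fun p hp hanc => h (T.wt p) p hp le_rfl hanc
  intro N
  induction N with
  | zero =>
    intro p hp hw _
    exact absurd hw (by have := wt_pos hp; omega)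
  | succ N ih =>
    intro p hp hw hanc
    by_cases hleaf : T.IsLeaf p
    · rcases hexp.2.1 p hleaf with ⟨hf, hc⟩ | hinc
      · rw [hc]; exact .final hf
      · obtain ⟨u, hu⟩ := hinc.exists_anchor
        have hpu := hanc p u hleaf (List.prefix_refl p) hinc hu
        exact absurd (prefix_antisymm' hu.2.1.1 hpu) hu.2.1.2
    · by_cases hanch : ∃ v, T.IsLeaf v ∧ T.Increasing v ∧ T.IsAnchorOf p v
      · obtain ⟨v, hvleaf, hvinc, hvanc⟩ := hanch
        obtain ⟨l, hlr, hll, hlmod⟩ := hexp.2.2 v p hvleaf hvanc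
        have hct : T.counter p < T.counter v := hvanc.2.2.2.1
        have hst : T.state p = T.state v := hvanc.2.2.1
        set d := T.counter v - T.counter p with hd
        obtain ⟨k, hk⟩ : ∃ k, l = T.counter v + d * k := by
          obtain ⟨k, hk⟩ := (Nat.modEq_iff_dvd' hll).mp hlmod.symm
          exact ⟨k, by omega⟩
        -- side children on the path from p to v have reachable labels
        have hside : ∀ q b, p <+: q → q ++ [b] <+: v → q ++ [!b] ∈ T.dom →
            B.Reach (T.state (q ++ [!b])) (T.counter (q ++ [!b])) := by
          intro q b hpq hqb hqin
          have hpw : p <+: q ++ [!b] := hpq.trans (List.prefix_append q [!b])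
          have hpwne : p ≠ q ++ [!b] := by
            intro hcontra
            have h1 := hpq.length_le
            have h2 : (q ++ [!b]).length = q.length + 1 := by simp
            have := congrArg List.length hcontra
            omega
          have hwlt := BTree.wt_lt hp hpw hpwne
          refine ih (q ++ [!b]) hqin (by omega) ?_
          intro x u hxleaf hwx hxinc hxanc
          have hxv : x ≠ v := by
            intro hcontra
            subst hcontra
            have hle1 := List.prefix_of_prefix_length_le hqb hwx (by simp)
            have hle2 := List.prefix_of_prefix_length_le hwx hqb (by simp)
            have := prefix_antisymm' hle1 hle2
            have := List.append_inj_right this rfl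
            simp at this
          obtain ⟨lca, hlca⟩ := exists_isLCA v x
          have hpx : p <+: x := hpw.trans hwx
          rcases hexp.1 v x hvleaf hxleaf hvinc hxinc (fun hcontra => hxv hcontra.symm)
              p u lca hvanc hxanc hlca with hcase | hcase
          · have hple : p <+: lca := hlca.2.2 p hvanc.2.1.1 hpx
            exact absurd (prefix_antisymm' hcase.1 hple) hcase.2
          · -- lca = q
            have hqv : q <+: v := (List.prefix_append q [b]).trans hqb
            have hqx : q <+: x := (List.prefix_append q [!b]).trans hwx
            have hqlca : q <+: lca := hlca.2.2 q hqv hqx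
            have hlq : lca = q := by
              by_contra hne
              have hlen : q.length + 1 ≤ lca.length :=
                length_lt_of_strict hqlca (Ne.symm hne)
              have h1 : q ++ [b] <+: lca :=
                List.prefix_of_prefix_length_le hqb hlca.1 (by simpa using hlen)
              have h2 : q ++ [!b] <+: lca :=
                List.prefix_of_prefix_length_le hwx hlca.2.1 (by simpa using hlen)
              have h3 := prefix_antisymm' (List.prefix_of_prefix_length_le h1 h2 (by simp))
                (List.prefix_of_prefix_length_le h2 h1 (by simp))
              have := List.append_inj_right h3 rfl
              simp at this
            rw [hlq] at hcase
            have hlenu : q.length + 1 ≤ u.length :=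
              length_lt_of_strict hcase.1 hcase.2
            exact List.prefix_of_prefix_length_le hwx hxanc.2.1.1 (by simpa using hlenu)
        -- the pumping chain
        obtain ⟨s, hs⟩ := hvanc.2.1.1
        subst hs
        have hchain : ∀ j, B.Reach (T.state (p ++ s)) (T.counter (p ++ s) + d * j) →
            B.Reach (T.state p) (T.counter p) := by
          intro j
          induction j with
          | zero =>
            intro hr
            have := pump hT s p hvleaf.1 hside 0 (by simpa using hr)
            simpa using this
          | succ j ihj =>
            intro hr
            have h2 := pump hT s p hvleaf.1 hside (d * (j + 1)) hr
            apply ihj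
            rw [← hst]
            have heq : T.counter (p ++ s) + d * j = T.counter p + d * (j + 1) := by
              have hdd : d * (j + 1) = d * j + d := by ring
              omega
            rw [heq]
            exact h2
        refine hchain k ?_
        have := hlr.reach
        rw [hk] at this
        exact this
      · rcases hT p hp hleaf with ⟨h1, h2, h3, h4⟩ | ⟨h1, h2, z, h3, h4⟩
        · have hchild : ∀ b : Bool, p ++ [b] ∈ T.dom →
              B.Reach (T.state (p ++ [b])) (T.counter (p ++ [b])) := by
            intro b hb
            have hwlt := BTree.wt_lt hp (List.prefix_append p [b]) (by simp)
            refine ih (p ++ [b]) hb (by omega) ?_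
            intro x u hxleaf hcx hxinc hxanc
            have hpx : p <+: x := (List.prefix_append p [b]).trans hcx
            have hpu := hanc x u hxleaf hpx hxinc hxanc
            have hpune : p ≠ u := fun hcontra => hanch ⟨x, hxleaf, hxinc, by rwa [hcontra]⟩
            have hlen : p.length + 1 ≤ u.length := length_lt_of_strict hpu hpune
            exact List.prefix_of_prefix_length_le hcx hxanc.2.1.1 (by simpa using hlen)
          rw [h4]
          exact .brs h3 (hchild false h1) (hchild true h2)
        · have hwlt := BTree.wt_lt hp (List.prefix_append p [false]) (by simp)
          have hchild : B.Reach (T.state (p ++ [false])) (T.counter (p ++ [false])) := by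
            refine ih (p ++ [false]) h1 (by omega) ?_
            intro x u hxleaf hcx hxinc hxanc
            have hpx : p <+: x := (List.prefix_append p [false]).trans hcx
            have hpu := hanc x u hxleaf hpx hxinc hxanc
            have hpune : p ≠ u := fun hcontra => hanch ⟨x, hxleaf, hxinc, by rwa [hcontra]⟩
            have hlen : p.length + 1 ≤ u.length := length_lt_of_strict hpu hpune
            exact List.prefix_of_prefix_length_le hcx hxanc.2.1.1 (by simpa using hlen)
          exact .uns h3 h4 hchild

theorem isPRT_subtree {B : BVASS1 Q} {T : BTree Q} (hT : B.IsPRT T)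
    (u : List Bool) (hu : u ∈ T.dom) : B.IsPRT (T.subtree u hu) := by
  intro x hx hnl
  have hx' : u ++ x ∈ T.dom := hx
  have hleaf : ¬ T.IsLeaf (u ++ x) := by
    rintro ⟨h1, h2⟩
    refine hnl ⟨hx, fun b hb => h2 b ?_⟩
    have : u ++ (x ++ [b]) ∈ T.dom := hb
    rwa [← List.append_assoc] at this
  have := hT (u ++ x) hx' hleaf
  simpa [BTree.subtree, BTree.state, BTree.counter, Set.mem_setOf_eq,
    List.append_assoc] using this

end BVASS1

end Main

/-- In an expandable partial reachability tree, every node's label is reachable or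
the subtree rooted there is not expandable; in particular the root label is reachable. -/
theorem stmt10 {Q : Type} (B : BVASS1 Q) (T : BTree Q)
    (hT : B.IsPRT T) (hexp : B.Expandable T) :
    (∀ u (hu : u ∈ T.dom),
        B.Reachable (T.state u) (T.counter u) ∨ ¬ B.Expandable (T.subtree u hu)) ∧
      B.Reachable (T.state []) (T.counter []) := by
  have root_reach : ∀ (T' : BTree Q), B.IsPRT T' → B.Expandable T' →
      B.Reachable (T'.state []) (T'.counter []) := by
    intro T' hT' hexp'
    exact (BVASS1.expandable_reach hT' hexp' [] T'.root_mem
      (fun x u _ _ _ _ => List.nil_prefix)).reachable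
  constructor
  · intro u hu
    by_cases h : B.Expandable (T.subtree u hu)
    · left
      have := root_reach (T.subtree u hu) (BVASS1.isPRT_subtree hT u hu) h
      simpa [BTree.subtree, BTree.state, BTree.counter] using this
    · exact Or.inr h
  · exact root_reach T hT hexp
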